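/- An abelian group G has property (NL) if and only if G is a torsion group. -/

import Mathlib

noncomputable section

open Metric

/-- The Gromov product of `x` and `y` at `w` with respect to a distance function `d`. -/
def gromovProd {α : Type*} (d : α → α → ℝ) (w x y : α) : ℝ :=
  (d w x + d w y - d x y) / 2

/-- Gromov hyperbolicity via the four-point condition, for an arbitrary distance function. -/
def FourPointHyperbolic {α : Type*} (d : α → α → ℝ) : Prop :=
  ∃ δ : ℝ, 0 ≤ δ ∧ ∀ w x y z : α,
    min (gromovProd d w x z) (gromovProd d w z y) - δ ≤ gromovProd d w x y

/-- A geodesic from `x` to `y`, parametrized by arc length on `[0, dist x y]`. -/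
def IsGeodesicSeg {X : Type*} [MetricSpace X] (x y : X) (f : ℝ → X) : Prop :=
  f 0 = x ∧ f (dist x y) = y ∧
    ∀ s ∈ Set.Icc (0 : ℝ) (dist x y), ∀ t ∈ Set.Icc (0 : ℝ) (dist x y),
      dist (f s) (f t) = |s - t|

/-- A geodesic metric space: any two points are joined by a geodesic. -/
def GeodesicSpace (X : Type*) [MetricSpace X] : Prop :=
  ∀ x y : X, ∃ f : ℝ → X, IsGeodesicSeg x y f

/-- The image (as a set) of a geodesic segment from `x` to `y`. -/
def geodSet {X : Type*} [MetricSpace X] (x y : X) (f : ℝ → X) : Set X :=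
  f '' Set.Icc (0 : ℝ) (dist x y)

/-- `p` lies within distance `δ` of the set `S` (i.e. in the closed `δ`-neighborhood). -/
def WithinDistOf {X : Type*} [MetricSpace X] (δ : ℝ) (p : X) (S : Set X) : Prop :=
  ∃ q ∈ S, dist p q ≤ δ

/-- Rips condition: each side of every geodesic triangle is contained in the union of the
closed `δ`-neighborhoods of the other two sides. -/
def RipsHyperbolic (X : Type*) [MetricSpace X] (δ : ℝ) : Prop :=
  ∀ x y z : X, ∀ fxy fyz fxz : ℝ → X,
    IsGeodesicSeg x y fxy → IsGeodesicSeg y z fyz → IsGeodesicSeg x z fxz →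
      (∀ p ∈ geodSet x y fxy, WithinDistOf δ p (geodSet y z fyz ∪ geodSet x z fxz)) ∧
      (∀ p ∈ geodSet y z fyz, WithinDistOf δ p (geodSet x y fxy ∪ geodSet x z fxz)) ∧
      (∀ p ∈ geodSet x z fxz, WithinDistOf δ p (geodSet x y fxy ∪ geodSet y z fyz))

/-- An (isometric) action of a group `G` on a metric space `X`. -/
structure IsIsomAction (G : Type*) [Group G] (X : Type*) [MetricSpace X]
    (act : G → X → X) : Prop where
  act_one : ∀ x : X, act 1 x = x
  act_mul : ∀ (g h : G) (x : X), act (g * h) x = act g (act h x)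
  isometry : ∀ (g : G) (x y : X), dist (act g x) (act g y) = dist x y

/-- A cobounded action: some (hence any) orbit is coarsely dense. -/
def CoboundedAction {G X : Type*} [Group G] [MetricSpace X] (act : G → X → X) : Prop :=
  ∃ (x : X) (R : ℝ), 0 ≤ R ∧ ∀ y : X, ∃ g : G, dist y (act g x) ≤ R

/-- A quasi-isometric embedding between two "spaces" given by distance functions. -/
def IsQIEmbWith {α β : Type*} (dα : α → α → ℝ) (dβ : β → β → ℝ) (f : α → β) : Prop :=
  ∃ A B : ℝ, 1 ≤ A ∧ 0 ≤ B ∧ ∀ x y : α,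
    dα x y / A - B ≤ dβ (f x) (f y) ∧ dβ (f x) (f y) ≤ A * dα x y + B

/-- The image of `f` is coarsely dense. -/
def CoarselyDenseWith {α β : Type*} (dβ : β → β → ℝ) (f : α → β) : Prop :=
  ∃ C : ℝ, 0 ≤ C ∧ ∀ y : β, ∃ x : α, dβ (f x) y ≤ C

/-- A quasi-isometry between two "spaces" given by distance functions. -/
def IsQuasiIsometryWith {α β : Type*} (dα : α → α → ℝ) (dβ : β → β → ℝ) (f : α → β) : Prop :=
  IsQIEmbWith dα dβ f ∧ CoarselyDenseWith dβ f

/-- The standard distance on `ℤ`. -/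
def zdist : ℤ → ℤ → ℝ := fun m n => |(m : ℝ) - (n : ℝ)|

/-- `g` is loxodromic for the action `act`: for some basepoint `x`, the orbit map
`n ↦ g ^ n • x` is a quasi-isometric embedding of `ℤ`. -/
def LoxodromicWith {G α : Type*} [Group G] (d : α → α → ℝ) (act : G → α → α) (g : G) : Prop :=
  ∃ x : α, IsQIEmbWith zdist d (fun n : ℤ => act (g ^ n) x)

/-- Acylindricity of an action, with respect to a distance function. -/
def AcylindricalWith {G α : Type*} (d : α → α → ℝ) (act : G → α → α) : Prop :=
  ∀ ε : ℝ, 0 < ε → ∃ (R : ℝ) (N : ℕ), 0 ≤ R ∧ ∀ x y : α, R ≤ d x y →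
    {g : G | d x (act g x) ≤ ε ∧ d y (act g y) ≤ ε}.Finite ∧
    Nat.card {g : G | d x (act g x) ≤ ε ∧ d y (act g y) ≤ ε} ≤ N

/-- Two subsets are within finite Hausdorff distance of each other. -/
def FinHausdorffClose {α : Type*} (d : α → α → ℝ) (A B : Set α) : Prop :=
  ∃ C : ℝ, (∀ a ∈ A, ∃ b ∈ B, d a b ≤ C) ∧ (∀ b ∈ B, ∃ a ∈ A, d a b ≤ C)

/-- The positive (`pos = true`) or negative (`pos = false`) orbit ray of `g` at `x`. -/
def orbitRay {G α : Type*} [Group G] (act : G → α → α) (g : G) (x : α) (pos : Bool) : Set α :=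
  Set.range fun n : ℕ => act (g ^ (if pos then (n : ℤ) else -(n : ℤ))) x

/-- Independence of two loxodromic elements with respect to the basepoint `x`: no orbit ray of
`g` is within finite Hausdorff distance of an orbit ray of `h`. -/
def IndepWith {G α : Type*} [Group G] (d : α → α → ℝ) (act : G → α → α) (x : α)
    (g h : G) : Prop :=
  ∀ s t : Bool, ¬ FinHausdorffClose d (orbitRay act g x s) (orbitRay act h x t)

/-- A group is virtually cyclic if it has a cyclic subgroup of finite index. -/
def VirtuallyCyclic (G : Type*) [Group G] : Prop :=
  ∃ H : Subgroup G, IsCyclic ↥H ∧ H.FiniteIndex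

/-- `S` is a generating set of `G`. -/
def IsGenSet {G : Type*} [Group G] (S : Set G) : Prop :=
  Subgroup.closure S = ⊤

/-- The word length of `g` with respect to `S`: the least `n` such that `g` is a product of
`n` elements of `S ∪ S⁻¹`. -/
def wordLength {G : Type*} [Group G] (S : Set G) (g : G) : ℕ :=
  sInf {n : ℕ | ∃ l : List G, l.length = n ∧ (∀ s ∈ l, s ∈ S ∨ s⁻¹ ∈ S) ∧ l.prod = g}

/-- The word metric `d_S(g,h) = ‖g⁻¹h‖_S` on `G`. -/
def wordDist {G : Type*} [Group G] (S : Set G) : G → G → ℝ :=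
  fun g h => (wordLength S (g⁻¹ * h) : ℝ)

/-- `S ⪯ T` : `S` is dominated by `T`, i.e. `sup_{t ∈ T} ‖t‖_S < ∞`. -/
def GenSetDominated {G : Type*} [Group G] (S T : Set G) : Prop :=
  ∃ M : ℕ, ∀ t ∈ T, wordLength S t ≤ M

/-- Equivalence of generating sets: mutual domination. -/
def GenSetEquiv {G : Type*} [Group G] (S T : Set G) : Prop :=
  GenSetDominated S T ∧ GenSetDominated T S

/-- The left multiplication action of a group on itself. -/
def leftTranslation {G : Type*} [Group G] : G → G → G := fun g x => g * x

universe uX uG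

/-- A bundled isometric action of `G` on a geodesic, δ-hyperbolic (Rips condition)
metric space. -/
structure GrpActHypSpace (G : Type uG) [Group G] : Type (max uG (uX + 1)) where
  carrier : Type uX
  [inst : MetricSpace carrier]
  act : G → carrier → carrier
  isIsomAction : IsIsomAction G carrier act
  δ : ℝ
  δ_nonneg : 0 ≤ δ
  geodesic : GeodesicSpace carrier
  rips : RipsHyperbolic carrier δ

attribute [instance] GrpActHypSpace.inst

/-- Property (NL): no isometric action of `G` on a geodesic Gromov-hyperbolic metric space
has a loxodromic element. -/
def PropNL (G : Type uG) [Group G] : Prop :=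
  ∀ A : GrpActHypSpace.{uX, uG} G, ∀ g : G,
    ¬ LoxodromicWith (fun a b : A.carrier => dist a b) A.act g

open CategoryTheory

instance : CharZero (ULift.{uG} ℝ) :=
  ⟨fun m n h => Nat.cast_injective (congrArg ULift.down h)⟩

open CategoryTheory in
lemma exists_translation_hom {G : Type uG} [CommGroup G] (g : G) (hg : ¬IsOfFinOrder g) :
    ∃ ψ : G → ℝ, (∀ a b : G, ψ (a * b) = ψ a + ψ b) ∧ ∀ n : ℤ, ψ (g ^ n) = n := by
  classical
  let a : Additive G := Additive.ofMul g
  let ι : ULift.{uG} ℤ →+ Additive G :=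
    { toFun := fun n => n.down • a
      map_zero' := by simp
      map_add' := fun m n => by simp [add_zsmul] }
  have hι : Function.Injective ι := by
    intro m n h
    have h2 : Function.Injective fun n : ℤ => g ^ n :=
      injective_zpow_iff_not_isOfFinOrder.2 hg
    have : m.down • a = n.down • a := h
    have : g ^ m.down = g ^ n.down := by
      have := congrArg Additive.toMul this
      simpa [a, ← ofMul_zpow] using this
    exact ULift.ext _ _ (h2 this)
  let ιc : AddCommGrpCat.of (ULift.{uG} ℤ) ⟶ AddCommGrpCat.of (Additive G) := AddCommGrpCat.ofHom ι
  haveI : Mono ιc := (AddCommGrpCat.mono_iff_injective _).2 hι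
  haveI hdiv : DivisibleBy (ULift.{uG} ℝ) ℤ := divisibleByIntOfCharZero
  haveI hinj : Injective (AddCommGrpCat.of (ULift.{uG} ℝ)) := AddCommGrpCat.injective_of_divisible _
  let g₀ : AddCommGrpCat.of (ULift.{uG} ℤ) ⟶ AddCommGrpCat.of (ULift.{uG} ℝ) :=
    AddCommGrpCat.ofHom
      { toFun := fun n => ULift.up (n.down : ℝ)
        map_zero' := by ext; simp
        map_add' := fun m n => by ext; simp }
  let φ := Injective.factorThru g₀ ιc
  have hfac : ∀ u : ULift.{uG} ℤ, φ (ιc u) = g₀ u := fun u => by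
    have := Injective.comp_factorThru g₀ ιc
    calc φ (ιc u) = (ιc ≫ φ) u := rfl
    _ = g₀ u := by rw [this]
  refine ⟨fun h => (φ (Additive.ofMul h)).down, fun b c => ?_, fun n => ?_⟩
  · show (φ (Additive.ofMul b + Additive.ofMul c)).down = (φ (Additive.ofMul b)).down + (φ (Additive.ofMul c)).down
    rw [map_add]; rfl
  · have h1 : Additive.ofMul (g ^ n) = ι (ULift.up n) := by
      simp [ι, a, ← ofMul_zpow]
    show (φ (Additive.ofMul (g ^ n))).down = (n : ℝ)
    have h1' := congrArg (fun u : Additive G => (φ u).down) h1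
    simp only at h1'
    have h2 := congrArg ULift.down (hfac (ULift.up n))
    exact h1'.trans h2


lemma betw_iff (a b u : ℝ) : |a - u| + |u - b| = |a - b| ↔ min a b ≤ u ∧ u ≤ max a b := by
  constructor
  · intro h
    constructor
    · by_contra hc
      push_neg at hc
      rw [lt_min_iff] at hc
      rw [abs_of_pos (by linarith : (0:ℝ) < a - u), abs_of_neg (by linarith : u - b < 0)] at h
      rcases abs_cases (a - b) with ⟨h3, _⟩ | ⟨h3, _⟩ <;> rw [h3] at h <;> linarith [hc.1, hc.2]
    · by_contra hc
      push_neg at hc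
      rw [max_lt_iff] at hc
      rw [abs_of_neg (by linarith : a - u < 0), abs_of_pos (by linarith : (0:ℝ) < u - b)] at h
      rcases abs_cases (a - b) with ⟨h3, _⟩ | ⟨h3, _⟩ <;> rw [h3] at h <;> linarith [hc.1, hc.2]
  · rintro ⟨h1, h2⟩
    rcases le_total a b with hab | hab
    · rw [min_eq_left hab] at h1; rw [max_eq_right hab] at h2
      rw [abs_of_nonpos (by linarith : a - u ≤ 0), abs_of_nonpos (by linarith : u - b ≤ 0),
        abs_of_nonpos (by linarith : a - b ≤ 0)]; ring
    · rw [min_eq_right hab] at h1; rw [max_eq_left hab] at h2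
      rw [abs_of_nonneg (by linarith : (0:ℝ) ≤ a - u), abs_of_nonneg (by linarith : (0:ℝ) ≤ u - b),
        abs_of_nonneg (by linarith : (0:ℝ) ≤ a - b)]; ring

lemma betw_uniq {a b u v : ℝ} (hu : |a - u| + |u - b| = |a - b|)
    (hv : |a - v| + |v - b| = |a - b|) (hs : |a - u| = |a - v|) : u = v := by
  obtain ⟨hu1, hu2⟩ := (betw_iff a b u).1 hu
  obtain ⟨hv1, hv2⟩ := (betw_iff a b v).1 hv
  rcases le_total a b with hab | hab
  · rw [min_eq_left hab] at hu1 hv1; rw [max_eq_right hab] at hu2 hv2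
    rw [abs_of_nonpos (by linarith : a - u ≤ 0), abs_of_nonpos (by linarith : a - v ≤ 0)] at hs
    linarith
  · rw [min_eq_right hab] at hu1 hv1; rw [max_eq_left hab] at hu2 hv2
    rw [abs_of_nonneg (by linarith : (0:ℝ) ≤ a - u), abs_of_nonneg (by linarith : (0:ℝ) ≤ a - v)] at hs
    linarith

lemma tripod {x y z p : ℝ} (h1 : min x y ≤ p) (h2 : p ≤ max x y) :
    (min y z ≤ p ∧ p ≤ max y z) ∨ (min x z ≤ p ∧ p ≤ max x z) := by
  rw [min_le_iff] at h1; rw [le_max_iff] at h2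
  rcases le_total p z with hz | hz
  · rcases h1 with h | h
    · exact Or.inr ⟨min_le_iff.2 (Or.inl h), le_max_iff.2 (Or.inr hz)⟩
    · exact Or.inl ⟨min_le_iff.2 (Or.inl h), le_max_iff.2 (Or.inr hz)⟩
  · rcases h2 with h | h
    · exact Or.inr ⟨min_le_iff.2 (Or.inr hz), le_max_iff.2 (Or.inl h)⟩
    · exact Or.inl ⟨min_le_iff.2 (Or.inr hz), le_max_iff.2 (Or.inl h)⟩

lemma uldist (x y : ULift.{uX} ℝ) : dist x y = |x.down - y.down| := by
  rw [ULift.dist_eq, Real.dist_eq]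

lemma geod_mem_iff {x y : ULift.{uX} ℝ} {f : ℝ → ULift.{uX} ℝ} (hf : IsGeodesicSeg x y f)
    (p : ULift.{uX} ℝ) :
    p ∈ geodSet x y f ↔ |x.down - p.down| + |p.down - y.down| = |x.down - y.down| := by
  obtain ⟨h0, hD, hiso⟩ := hf
  set D := dist x y with hDdef
  have hDeq : D = |x.down - y.down| := uldist x y
  have hD0 : (0:ℝ) ≤ D := dist_nonneg
  have key : ∀ s, s ∈ Set.Icc (0:ℝ) D →
      |x.down - (f s).down| = s ∧ |(f s).down - y.down| = D - s := by
    intro s hs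
    have e1 : dist (f s) (f 0) = |s - 0| := hiso s hs 0 ⟨le_refl 0, hD0⟩
    have e2 : dist (f s) (f D) = |s - D| := hiso s hs D ⟨hD0, le_refl D⟩
    rw [h0, uldist, sub_zero, abs_of_nonneg hs.1] at e1
    rw [hD, uldist, abs_of_nonpos (by linarith [hs.2] : s - D ≤ 0)] at e2
    constructor
    · rw [abs_sub_comm]; simpa using e1
    · simpa using e2
  constructor
  · rintro ⟨s, hs, rfl⟩
    obtain ⟨e1, e2⟩ := key s hs
    rw [e1, e2, ← hDeq]; ring
  · intro h
    set s := |x.down - p.down| with hsdef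
    have hs1 : (0:ℝ) ≤ s := abs_nonneg _
    have hs2 : s ≤ D := by
      have := abs_nonneg (p.down - y.down); rw [hDeq]; linarith [h]
    obtain ⟨e1, e2⟩ := key s ⟨hs1, hs2⟩
    refine ⟨s, ⟨hs1, hs2⟩, ?_⟩
    have hq : |x.down - (f s).down| + |(f s).down - y.down| = |x.down - y.down| := by
      rw [e1, e2, ← hDeq]; ring
    have hdown : (f s).down = p.down := betw_uniq hq h (by rw [e1])
    exact ULift.ext _ _ hdown

lemma geodesic_ulift : GeodesicSpace (ULift.{uX} ℝ) := by
  intro x y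
  refine ⟨fun t => ULift.up (if x.down ≤ y.down then x.down + t else x.down - t), ?_, ?_, ?_⟩
  · ext; split_ifs <;> simp
  · ext
    rw [uldist]
    split_ifs with h
    · simp [abs_of_nonpos (by linarith : x.down - y.down ≤ 0)]
    · simp [abs_of_nonneg (by linarith : (0:ℝ) ≤ x.down - y.down)]
  · intro s _ t _
    rw [uldist]
    split_ifs with h
    · simp only [ULift.up_down]
      ring_nf
    · simp only [ULift.up_down]
      rw [show x.down - s - (x.down - t) = -(s - t) by ring, abs_neg]

lemma rips_ulift : RipsHyperbolic (ULift.{uX} ℝ) 0 := by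
  intro x y z fxy fyz fxz h1 h2 h3
  refine ⟨?_, ?_, ?_⟩
  · intro p hp
    rw [geod_mem_iff h1, betw_iff] at hp
    rcases tripod hp.1 hp.2 with hc | hc
    · exact ⟨p, Or.inl ((geod_mem_iff h2 p).2 ((betw_iff _ _ _).2 hc)), le_of_eq (dist_self p)⟩
    · exact ⟨p, Or.inr ((geod_mem_iff h3 p).2 ((betw_iff _ _ _).2 hc)), le_of_eq (dist_self p)⟩
  · intro p hp
    rw [geod_mem_iff h2, betw_iff] at hp
    rcases tripod (z := x.down) hp.1 hp.2 with hc | hc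
    · exact ⟨p, Or.inr ((geod_mem_iff h3 p).2 ((betw_iff _ _ _).2
        ⟨(min_comm _ _).le.trans hc.1, hc.2.trans (max_comm _ _).le⟩)), le_of_eq (dist_self p)⟩
    · exact ⟨p, Or.inl ((geod_mem_iff h1 p).2 ((betw_iff _ _ _).2
        ⟨(min_comm _ _).le.trans hc.1, hc.2.trans (max_comm _ _).le⟩)), le_of_eq (dist_self p)⟩
  · intro p hp
    rw [geod_mem_iff h3, betw_iff] at hp
    rcases tripod (z := y.down) hp.1 hp.2 with hc | hc
    · exact ⟨p, Or.inr ((geod_mem_iff h2 p).2 ((betw_iff _ _ _).2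
        ⟨(min_comm _ _).le.trans hc.1, hc.2.trans (max_comm _ _).le⟩)), le_of_eq (dist_self p)⟩
    · exact ⟨p, Or.inl ((geod_mem_iff h1 p).2 ((betw_iff _ _ _).2 hc)), le_of_eq (dist_self p)⟩

/-- an abelian group has property (NL) iff it is torsion. -/
theorem stmt_6 {G : Type uG} [CommGroup G] :
    PropNL.{uX, uG} G ↔ ∀ g : G, IsOfFinOrder g := by
  constructor
  · intro hNL g
    by_contra hg
    obtain ⟨ψ, hmul, hpow⟩ := exists_translation_hom g hg
    have hψ1 : ψ (1 : G) = 0 := by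
      have := hmul 1 1; simp only [one_mul] at this; linarith
    refine hNL
      { carrier := ULift.{uX} ℝ
        act := fun h x => ULift.up (x.down + ψ h)
        isIsomAction :=
          { act_one := fun x => by ext; simp [hψ1]
            act_mul := fun a b x => by ext; simp [hmul]; ring
            isometry := fun a x y => by rw [uldist, uldist]; simp }
        δ := 0
        δ_nonneg := le_refl 0
        geodesic := geodesic_ulift
        rips := rips_ulift } g ?_
    refine ⟨ULift.up 0, 1, 0, le_refl 1, le_refl 0, fun m n => ?_⟩
    have hd : dist (ULift.up (0 + ψ (g ^ m)) : ULift.{uX} ℝ) (ULift.up (0 + ψ (g ^ n)))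
        = zdist m n := by
      rw [uldist]; simp [hpow, zdist]
    constructor
    · show zdist m n / 1 - 0 ≤
        dist (ULift.up (0 + ψ (g ^ m)) : ULift.{uX} ℝ) (ULift.up (0 + ψ (g ^ n)))
      rw [hd]; simp
    · show dist (ULift.up (0 + ψ (g ^ m)) : ULift.{uX} ℝ) (ULift.up (0 + ψ (g ^ n)))
        ≤ 1 * zdist m n + 0
      rw [hd]; simp
  · intro htor A g hlox
    obtain ⟨x, A', B', hA, hB, hbd⟩ := hlox
    obtain ⟨n, hn, hgn⟩ := isOfFinOrder_iff_pow_eq_one.1 (htor g)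
    set k : ℕ := ⌈A' * B'⌉₊ + 1 with hk
    set m : ℤ := ((n * k : ℕ) : ℤ) with hm
    have h1 : g ^ m = 1 := by rw [hm, zpow_natCast, pow_mul, hgn, one_pow]
    have hf : A.act (g ^ m) x = x := by rw [h1, A.isIsomAction.act_one]
    have hf0 : A.act (g ^ (0:ℤ)) x = x := by rw [zpow_zero, A.isIsomAction.act_one]
    have hlow := (hbd m 0).1
    change zdist m 0 / A' - B' ≤ dist (A.act (g ^ m) x) (A.act (g ^ (0:ℤ)) x) at hlow
    rw [hf, hf0, dist_self] at hlow
    have hz : zdist m 0 = ((n * k : ℕ) : ℝ) := by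
      rw [hm]; simp [zdist]
    rw [hz] at hlow
    have hA0 : (0:ℝ) < A' := lt_of_lt_of_le one_pos hA
    have hle : ((n * k : ℕ) : ℝ) ≤ A' * B' := by
      have h2 : ((n * k : ℕ) : ℝ) / A' ≤ B' := by linarith
      calc ((n * k : ℕ) : ℝ) = ((n * k : ℕ) : ℝ) / A' * A' := by field_simp
        _ ≤ B' * A' := mul_le_mul_of_nonneg_right h2 (le_of_lt hA0)
        _ = A' * B' := by ring
    have hceil : A' * B' < (k : ℝ) := by
      calc A' * B' ≤ (⌈A' * B'⌉₊ : ℝ) := Nat.le_ceil _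
        _ < (k : ℝ) := by rw [hk]; push_cast; linarith
    have hkn : (k : ℝ) ≤ ((n * k : ℕ) : ℝ) := by
      have h3 : k ≤ n * k := Nat.le_mul_of_pos_left k hn
      exact_mod_cast h3
    linarith
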